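/- For every integer D ≥ 1, the function F_D(u) = ((1 + √u)^{1/D} - 1)² is concave on [0, +∞). -/

import Mathlib

open Real Set

/-- Concavity of `x ↦ (1+x)^a - 1` on `[0, ∞)` for `0 ≤ a ≤ 1`. -/
lemma aux_concave_G {a : ℝ} (ha0 : 0 ≤ a) (ha1 : a ≤ 1) :
    ConcaveOn ℝ (Set.Ici 0) (fun x : ℝ => (1 + x) ^ a - 1) := by
  have h := Real.concaveOn_rpow ha0 ha1
  constructor
  · exact convex_Ici 0
  · intro x hx y hy p q hp hq hpq
    have hx' : (0:ℝ) ≤ 1 + x := by simp at hx; linarith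
    have hy' : (0:ℝ) ≤ 1 + y := by simp at hy; linarith
    have := h.2 (Set.mem_Ici.mpr hx') (Set.mem_Ici.mpr hy') hp hq hpq
    simp only [smul_eq_mul] at this ⊢
    have he : 1 + (p * x + q * y) = p * (1 + x) + q * (1 + y) := by ring_nf; linarith [hpq]
    rw [he]
    nlinarith [this]

/-- The slope `((1+x)^a - 1)/x` is antitone on `(0,∞)` for `0 ≤ a ≤ 1`. -/
lemma aux_slope_anti {a : ℝ} (ha0 : 0 ≤ a) (ha1 : a ≤ 1) {x y : ℝ}
    (hx : 0 < x) (hxy : x ≤ y) :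
    ((1 + y) ^ a - 1) / y ≤ ((1 + x) ^ a - 1) / x := by
  have hy : 0 < y := lt_of_lt_of_le hx hxy
  have hG := aux_concave_G ha0 ha1
  have key : (x / y) * ((1 + y) ^ a - 1) ≤ (1 + x) ^ a - 1 := by
    have h1 : x / y ∈ Set.Icc (0:ℝ) 1 := by
      constructor
      · positivity
      · rw [div_le_one hy]; exact hxy
    have := hG.2 (Set.mem_Ici.mpr hy.le) (Set.mem_Ici.mpr (le_refl (0:ℝ)))
      h1.1 (by linarith [h1.2] : (0:ℝ) ≤ 1 - x / y) (by ring)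
    simp only [smul_eq_mul, mul_zero, add_zero] at this
    have hxy' : x / y * y = x := div_mul_cancel₀ x hy.ne'
    rw [hxy'] at this
    simp only [Real.one_rpow] at this
    linarith [this]
  rw [div_le_div_iff₀ hy hx]
  have : x * ((1 + y) ^ a - 1) ≤ y * ((1 + x) ^ a - 1) := by
    have := mul_le_mul_of_nonneg_left key hy.le
    rw [mul_comm (x / y) _, ← mul_assoc] at this
    rw [mul_assoc] at this
    calc x * ((1 + y) ^ a - 1) = y * (((1 + y) ^ a - 1) * (x / y)) := by
          field_simp
      _ ≤ y * ((1 + x) ^ a - 1) := this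
  linarith [this]

theorem stmt11 (D : ℕ) (hD : 1 ≤ D) :
    ConcaveOn ℝ (Set.Ici 0) (fun u => ((1 + Real.sqrt u) ^ ((D : ℝ)⁻¹) - 1) ^ 2) := by
  set a : ℝ := (D : ℝ)⁻¹ with ha_def
  have hDpos : (0:ℝ) < D := by exact_mod_cast hD
  have ha0 : 0 < a := by positivity
  have ha1 : a ≤ 1 := by
    rw [ha_def, inv_le_one_iff₀]
    right; exact_mod_cast hD
  set f : ℝ → ℝ := fun u => ((1 + Real.sqrt u) ^ a - 1) ^ 2 with hf_def
  -- derivative formula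
  set Q : ℝ → ℝ := fun u => ((1 + Real.sqrt u) ^ a - 1) / Real.sqrt u with hQ_def
  set P : ℝ → ℝ := fun u => a * (1 + Real.sqrt u) ^ (a - 1) with hP_def
  have hderiv : ∀ u ∈ Set.Ioi (0:ℝ), HasDerivAt f (Q u * P u) u := by
    intro u hu
    have hu0 : (0:ℝ) < u := hu
    have hs : 0 < Real.sqrt u := Real.sqrt_pos.mpr hu0
    have h1 : HasDerivAt (fun v : ℝ => 1 + Real.sqrt v) (1 / (2 * Real.sqrt u)) u := by
      simpa using (Real.hasDerivAt_sqrt hu0.ne').const_add 1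
    have hb : (0:ℝ) < 1 + Real.sqrt u := by linarith
    have h2 : HasDerivAt (fun v : ℝ => (1 + Real.sqrt v) ^ a)
        (1 / (2 * Real.sqrt u) * a * (1 + Real.sqrt u) ^ (a - 1)) u :=
      h1.rpow_const (Or.inl hb.ne')
    have h3 : HasDerivAt (fun v : ℝ => ((1 + Real.sqrt v) ^ a - 1) ^ 2)
        (((2:ℕ):ℝ) * ((1 + Real.sqrt u) ^ a - 1) ^ (2 - 1) * (1 / (2 * Real.sqrt u) * a * (1 + Real.sqrt u) ^ (a - 1))) u :=
      (h2.sub_const 1).fun_pow 2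
    convert h3 using 1
    simp only [hQ_def, hP_def]
    field_simp
    ring
  have hcont : ContinuousOn f (Set.Ici 0) := by
    apply Continuous.continuousOn
    have : Continuous fun u : ℝ => (1 + Real.sqrt u) ^ a := by
      apply Continuous.rpow_const (continuous_const.add Real.continuous_sqrt)
      intro x
      exact Or.inr ha0.le
    exact ((this.sub continuous_const).pow 2)
  have hint : interior (Set.Ici (0:ℝ)) = Set.Ioi 0 := interior_Ici
  have hdiff : DifferentiableOn ℝ f (interior (Set.Ici 0)) := by
    rw [hint]
    intro u hu
    exact (hderiv u hu).differentiableAt.differentiableWithinAt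
  have hanti : AntitoneOn (deriv f) (interior (Set.Ici 0)) := by
    rw [hint]
    intro u hu v hv huv
    rw [(hderiv u hu).deriv, (hderiv v hv).deriv]
    have hu0 : (0:ℝ) < u := hu
    have hv0 : (0:ℝ) < v := hv
    have hsu : 0 < Real.sqrt u := Real.sqrt_pos.mpr hu0
    have hsv : 0 < Real.sqrt v := Real.sqrt_pos.mpr hv0
    have hsuv : Real.sqrt u ≤ Real.sqrt v := Real.sqrt_le_sqrt huv
    -- Q antitone
    have hQuv : Q v ≤ Q u := aux_slope_anti ha0.le ha1 hsu hsuv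
    -- Q nonneg
    have hQu : 0 ≤ Q u := by
      apply div_nonneg _ hsu.le
      have : (1:ℝ) ≤ (1 + Real.sqrt u) ^ a :=
        Real.one_le_rpow (by linarith) ha0.le
      linarith
    -- P antitone
    have hPuv : P v ≤ P u := by
      apply mul_le_mul_of_nonneg_left _ ha0.le
      exact Real.rpow_le_rpow_of_nonpos (by linarith) (by linarith) (by linarith)
    -- P nonneg
    have hPv : 0 ≤ P v := by
      apply mul_nonneg ha0.le
      exact Real.rpow_nonneg (by linarith) _
    calc Q v * P v ≤ Q u * P v := mul_le_mul_of_nonneg_right hQuv hPv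
      _ ≤ Q u * P u := mul_le_mul_of_nonneg_left hPuv hQu
  exact hanti.concaveOn_of_deriv (convex_Ici 0) hcont hdiff
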